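/- Let f : ℝ₊ → ℝ₊ be nonincreasing and convex with f(t) → 0 as t → ∞, and set g(s) = f(|s|) for s ∈ ℝ. Then g is a positive definite function on ℝ, i.e., for every finite sequence s₁,…,s_n ∈ ℝ and c₁,…,c_n ∈ ℂ, one has Σ_{i,j} c_i \overline{c_j} g(s_i − s_j) ≥ 0. -/

import Mathlib

open Real Complex Filter MeasureTheory
open scoped ComplexOrder

lemma indic_prod_eq (a x y : ℝ) :
    (fun t => (Set.Icc x (x + a)).indicator (1 : ℝ → ℝ) t
        * (Set.Icc y (y + a)).indicator (1 : ℝ → ℝ) t)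
      = (Set.Icc (max x y) (min (x + a) (y + a))).indicator (1 : ℝ → ℝ) := by
  rw [← Set.Icc_inter_Icc, Set.inter_indicator_one]
  rfl

lemma tent_overlap (a x y : ℝ) (ha : 0 ≤ a) :
    ∫ t, (Set.Icc x (x + a)).indicator (1 : ℝ → ℝ) t
        * (Set.Icc y (y + a)).indicator (1 : ℝ → ℝ) t
      = max 0 (a - |x - y|) := by
  rw [indic_prod_eq]
  rw [show (∫ t, (Set.Icc (max x y) (min (x + a) (y + a))).indicator (1 : ℝ → ℝ) t)
      = (volume (Set.Icc (max x y) (min (x + a) (y + a)))).toReal from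
    integral_indicator_one measurableSet_Icc]
  rw [Real.volume_Icc, ENNReal.toReal_ofReal', max_comm]
  congr 1
  rcases le_total x y with h | h
  · rw [max_eq_right h, min_eq_left (by linarith), _root_.abs_of_nonpos (by linarith)]
    ring
  · rw [max_eq_left h, min_eq_right (by linarith), _root_.abs_of_nonneg (by linarith)]
    ring

lemma tent_integrable (a x y : ℝ) :
    Integrable (fun t => (Set.Icc x (x + a)).indicator (1 : ℝ → ℝ) t
        * (Set.Icc y (y + a)).indicator (1 : ℝ → ℝ) t) := by
  rw [indic_prod_eq, integrable_indicator_iff measurableSet_Icc]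
  exact integrableOn_const measure_Icc_lt_top.ne

lemma tent_psd (n : ℕ) (s : Fin n → ℝ) (c : Fin n → ℂ) (a : ℝ) (ha : 0 ≤ a) :
    0 ≤ ∑ i : Fin n, ∑ j : Fin n,
      c i * (starRingEnd ℂ) (c j) * ((max 0 (a - |s i - s j|) : ℝ) : ℂ) := by
  set u : Fin n → ℝ → ℝ := fun i => (Set.Icc (s i) (s i + a)).indicator (1 : ℝ → ℝ) with hu
  set F : ℝ → ℂ := fun x => ∑ i, c i * ((u i x : ℝ) : ℂ) with hF
  have hterm : ∀ i j : Fin n, Integrable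
      (fun x => (c i * (starRingEnd ℂ) (c j)) * ((u i x * u j x : ℝ) : ℂ)) := by
    intro i j
    exact ((tent_integrable a (s i) (s j)).ofReal.const_mul _)
  have expand : ∀ x, ((Complex.normSq (F x) : ℝ) : ℂ)
      = ∑ i, ∑ j, (c i * (starRingEnd ℂ) (c j)) * ((u i x * u j x : ℝ) : ℂ) := by
    intro x
    rw [← Complex.mul_conj]
    simp only [hF, map_sum, Finset.sum_mul_sum, map_mul, Complex.conj_ofReal]
    refine Finset.sum_congr rfl fun i _ => Finset.sum_congr rfl fun j _ => ?_
    push_cast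
    ring
  have hreal : ∫ x, ((Complex.normSq (F x) : ℝ) : ℂ)
      = ((∫ x, Complex.normSq (F x) : ℝ) : ℂ) := by
    exact integral_ofReal
  have step1 : ∫ x, ((Complex.normSq (F x) : ℝ) : ℂ)
      = ∑ i, ∑ j, (c i * (starRingEnd ℂ) (c j)) * ((max 0 (a - |s i - s j|) : ℝ) : ℂ) := by
    simp only [expand]
    rw [integral_finset_sum _ (fun i _ => integrable_finset_sum _ (fun j _ => hterm i j))]
    refine Finset.sum_congr rfl fun i _ => ?_
    rw [integral_finset_sum _ (fun j _ => hterm i j)]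
    refine Finset.sum_congr rfl fun j _ => ?_
    rw [integral_const_mul]
    congr 1
    rw [show (∫ x, ((u i x * u j x : ℝ) : ℂ)) = ((∫ x, (u i x * u j x : ℝ) : ℝ) : ℂ) from
      integral_ofReal]
    rw [tent_overlap a (s i) (s j) ha]
  have h0 : (0:ℂ) ≤ ∫ x, ((Complex.normSq (F x) : ℝ) : ℂ) := by
    rw [hreal, Complex.zero_le_real]
    exact integral_nonneg fun x => Complex.normSq_nonneg _
  rw [step1] at h0
  calc (0:ℂ) ≤ _ := h0
    _ = _ := by
      refine Finset.sum_congr rfl fun i _ => Finset.sum_congr rfl fun j _ => ?_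
      ring


private lemma polya_core (N : ℕ) (a v : ℕ → ℝ)
    (ha : ∀ k, k < N → a k < a (k+1))
    (hvN : v N = 0)
    (hslope : ∀ k, 1 ≤ k → k + 1 ≤ N →
      (v k - v (k-1)) / (a k - a (k-1)) ≤ (v (k+1) - v k) / (a (k+1) - a k))
    (hlast : 1 ≤ N → (v N - v (N-1)) / (a N - a (N-1)) ≤ 0) :
    ∃ μ : ℕ → ℝ, (∀ k, 1 ≤ k → k ≤ N → 0 ≤ μ k) ∧
      ∀ l, l ≤ N → v l = ∑ k ∈ Finset.Ioc 0 N, μ k * max 0 (a k - a l) := by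
  classical
  set σ : ℕ → ℝ := fun k => if 1 ≤ k ∧ k ≤ N then (v k - v (k-1)) / (a k - a (k-1)) else 0
    with hσ
  refine ⟨fun k => σ (k+1) - σ k, ?_, ?_⟩
  · -- nonnegativity
    intro k hk1 hkN
    rw [sub_nonneg]
    simp only [hσ]
    rw [if_pos ⟨hk1, hkN⟩]
    by_cases h2 : k + 1 ≤ N
    · rw [if_pos ⟨by omega, h2⟩]
      simpa using hslope k hk1 h2
    · have hk : k = N := by omega
      rw [if_neg (by omega)]
      subst hk
      exact hlast hk1
  · -- monotonicity of a
    have amono : ∀ i j, i ≤ j → j ≤ N → a i ≤ a j := by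
      intro i j hij
      induction j, hij using Nat.le_induction with
      | base => intro _; exact le_rfl
      | succ m him ih => intro h; exact (ih (by omega)).trans (ha m (by omega)).le
    -- telescoping sum
    have hTel : ∀ l, l ≤ N → ∑ k ∈ Finset.Ioc l N, (σ (k+1) - σ k) = - σ (l+1) := by
      intro l hl
      have h1 : Finset.Ioc l N = Finset.Ico (l+1) (N+1) := by
        ext k; simp [Nat.lt_succ_iff, Nat.succ_le_iff]
      rw [h1, Finset.sum_Ico_eq_sum_range]
      have h2 : ∀ i, σ (l + 1 + i + 1) - σ (l + 1 + i)
          = (fun i => σ (l + 1 + i)) (i+1) - (fun i => σ (l + 1 + i)) i := by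
        intro i; simp [Nat.add_assoc]
      simp only [h2]
      rw [Finset.sum_range_sub (fun i => σ (l + 1 + i))]
      have h3 : l + 1 + (N + 1 - (l + 1)) = N + 1 := by omega
      rw [h3]
      have h4 : σ (N+1) = 0 := by simp only [hσ]; rw [if_neg (by omega)]
      simp [h4]
    -- main identity by downward induction
    have main : ∀ d l, l + d = N →
        v l = ∑ k ∈ Finset.Ioc 0 N, (σ (k+1) - σ k) * max 0 (a k - a l) := by
      intro d
      induction d with
      | zero =>
        intro l hl
        have hlN : l = N := by omega
        rw [hlN, hvN, eq_comm]
        exact Finset.sum_eq_zero fun k hk => by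
          rw [Finset.mem_Ioc] at hk
          rw [max_eq_left (by have := amono k N hk.2 le_rfl; linarith), mul_zero]
      | succ d ih =>
        intro l hl
        have hlN : l < N := by omega
        have IH := ih (l+1) (by omega)
        have hterm : ∀ k ∈ Finset.Ioc 0 N,
            (σ (k+1) - σ k) * max 0 (a k - a l)
            = (σ (k+1) - σ k) * max 0 (a k - a (l+1))
              + (if l + 1 ≤ k then (σ (k+1) - σ k) * (a (l+1) - a l) else 0) := by
          intro k hk
          rw [Finset.mem_Ioc] at hk
          by_cases hkl : l + 1 ≤ k
          · rw [if_pos hkl]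
            have h1 : a (l+1) ≤ a k := amono (l+1) k hkl hk.2
            have h2 : a l < a (l+1) := ha l hlN
            rw [max_eq_right (by linarith), max_eq_right (by linarith)]
            ring
          · rw [if_neg hkl]
            have h1 : a k ≤ a l := amono k l (by omega) (by omega)
            have h2 : a l < a (l+1) := ha l hlN
            rw [max_eq_left (by linarith), max_eq_left (by linarith), add_zero]
        have hΔ : 0 < a (l+1) - a l := sub_pos.2 (ha l hlN)
        have hσl : σ (l+1) = (v (l+1) - v l) / (a (l+1) - a l) := by
          simp only [hσ]
          rw [if_pos ⟨by omega, by omega⟩]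
          simp
        have hfilter : Finset.filter (fun k => l + 1 ≤ k) (Finset.Ioc 0 N)
            = Finset.Ioc l N := by
          ext k
          simp only [Finset.mem_filter, Finset.mem_Ioc]
          omega
        have hsplit : ∑ k ∈ Finset.Ioc 0 N,
            (if l + 1 ≤ k then (σ (k+1) - σ k) * (a (l+1) - a l) else 0)
            = v l - v (l+1) := by
          rw [← Finset.sum_filter, hfilter, ← Finset.sum_mul, hTel l (by omega), hσl]
          field_simp
          ring
        rw [Finset.sum_congr rfl hterm, Finset.sum_add_distrib, ← IH, hsplit]
        ring
    exact fun l hl => main (N - l) l (by omega)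

lemma decomp (f : ℝ → ℝ)
    (hpos : ∀ t ∈ Set.Ici (0 : ℝ), 0 ≤ f t)
    (hanti : AntitoneOn f (Set.Ici 0))
    (hconv : ConvexOn ℝ (Set.Ici 0) f)
    (hlim : Tendsto f atTop (nhds 0))
    (D : Finset ℝ) (hD : ∀ t ∈ D, 0 ≤ t) :
    ∃ (N : ℕ) (aa μ : ℕ → ℝ),
      (∀ k, 0 ≤ aa k) ∧ (∀ k, 0 ≤ μ k) ∧
      ∀ t ∈ D, f t = ∑ k ∈ Finset.Ioc 0 N, μ k * max 0 (aa k - t) := by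
  classical
  rcases D.eq_empty_or_nonempty with rfl | hne
  · exact ⟨0, fun _ => 0, fun _ => 0, fun _ => le_rfl, fun _ => le_rfl, by simp⟩
  set m : ℕ := D.card - 1 with hm
  have hcard : D.card = m + 1 := by
    have := Finset.card_pos.2 hne; omega
  set e : Fin D.card ≃o {x // x ∈ D} := D.orderIsoOfFin rfl with he
  set b : ℕ → ℝ := fun k => if h : k < D.card then (e ⟨k, h⟩ : ℝ) else 0 with hb
  have hbD : ∀ k, k ≤ m → b k ∈ D := by
    intro k hk
    rw [hb]
    simp only
    rw [dif_pos (by omega)]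
    exact (e ⟨k, by omega⟩).2
  have hb0 : ∀ k, k ≤ m → (0:ℝ) ≤ b k := fun k hk => hD _ (hbD k hk)
  have hbmono : ∀ k, k < m → b k < b (k+1) := by
    intro k hk
    rw [hb]
    simp only
    rw [dif_pos (by omega), dif_pos (by omega)]
    have := e.strictMono (show (⟨k, by omega⟩ : Fin D.card) < ⟨k+1, by omega⟩ from by
      simp [Fin.mk_lt_mk])
    exact_mod_cast this
  have hbsurj : ∀ t ∈ D, ∃ l, l ≤ m ∧ b l = t := by
    intro t ht
    obtain ⟨k, hk⟩ := e.surjective ⟨t, ht⟩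
    refine ⟨k, by omega, ?_⟩
    rw [hb]
    simp only
    rw [dif_pos k.2]
    simp [Fin.eta, hk]
  -- strict monotone over ≤ m gives monotone
  have hbmono' : ∀ i j, i ≤ j → j ≤ m → b i ≤ b j := by
    intro i j hij
    induction j, hij using Nat.le_induction with
    | base => intro _; exact le_rfl
    | succ p hp ih => intro h; exact (ih (by omega)).trans (hbmono p (by omega)).le
  -- convexity slope facts among b-points
  have hslopeb : ∀ k, 1 ≤ k → k + 1 ≤ m →
      (f (b k) - f (b (k-1))) / (b k - b (k-1))
        ≤ (f (b (k+1)) - f (b k)) / (b (k+1) - b k) := by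
    intro k hk1 hk2
    have h1 : b (k-1) < b k := by
      have := hbmono (k-1) (by omega)
      rwa [show k - 1 + 1 = k from by omega] at this
    have h2 : b k < b (k+1) := hbmono k (by omega)
    exact hconv.slope_mono_adjacent (hb0 _ (by omega)) (hb0 _ (by omega)) h1 h2
  have hbnn : ∀ k, 0 ≤ b k := by
    intro k
    by_cases h : k ≤ m
    · exact hb0 k h
    · rw [hb]; simp only; rw [dif_neg (by omega)]
  have hfnn : ∀ k, k ≤ m → 0 ≤ f (b k) := fun k hk => hpos _ (hb0 k hk)
  by_cases hfm : f (b m) = 0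
  · -- Case A : no extension needed
    obtain ⟨μ, hμnn, hμ⟩ := polya_core m b (fun k => f (b k)) hbmono hfm hslopeb
      (fun h1m => by
        have h1 : b (m-1) < b m := by
          have := hbmono (m-1) (by omega)
          rwa [show m - 1 + 1 = m from by omega] at this
        have h2 : f (b m) ≤ f (b (m-1)) :=
          hanti (hb0 _ (by omega)) (hb0 _ (by omega)) h1.le
        exact div_nonpos_iff.2 (Or.inr ⟨by linarith, by linarith⟩))
    refine ⟨m, b, fun k => if 1 ≤ k ∧ k ≤ m then μ k else 0, hbnn, ?_, ?_⟩
    · intro k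
      by_cases h : 1 ≤ k ∧ k ≤ m
      · simp only [if_pos h]; exact hμnn k h.1 h.2
      · simp only [if_neg h]; exact le_rfl
    · intro t ht
      obtain ⟨l, hl, rfl⟩ := hbsurj t ht
      rw [hμ l hl]
      refine Finset.sum_congr rfl fun k hk => ?_
      rw [Finset.mem_Ioc] at hk
      simp only [if_pos (show 1 ≤ k ∧ k ≤ m from ⟨hk.1, hk.2⟩)]
  · have hfm' : 0 < f (b m) := lt_of_le_of_ne (hfnn m le_rfl) (Ne.symm hfm)
    by_cases hm0 : m = 0
    · -- single point, explicit tent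
      refine ⟨1, fun _ => b 0 + 1, fun _ => f (b 0), fun _ => by show (0:ℝ) ≤ b 0 + 1; linarith [hb0 0 (Nat.zero_le m)],
        fun _ => by show (0:ℝ) ≤ f (b 0); exact hfnn 0 (Nat.zero_le m), ?_⟩
      intro t ht
      obtain ⟨l, hl, rfl⟩ := hbsurj t ht
      have hl0 : l = 0 := by omega
      subst hl0
      rw [show Finset.Ioc 0 1 = {1} from rfl, Finset.sum_singleton]
      beta_reduce
      rw [show b 0 + 1 - b 0 = 1 from by ring, max_eq_right (by linarith), mul_one]
    · -- m ≥ 1 : extension point needed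
      have hm1 : 1 ≤ m := by omega
      have h1 : b (m-1) < b m := by
        have := hbmono (m-1) (by omega)
        rwa [show m - 1 + 1 = m from by omega] at this
      set σm : ℝ := (f (b m) - f (b (m-1))) / (b m - b (m-1)) with hσm
      have hΔ : 0 < b m - b (m-1) := by linarith
      have hstrict : f (b m) < f (b (m-1)) := by
        have hle : f (b m) ≤ f (b (m-1)) :=
          hanti (hb0 _ (by omega)) (hb0 _ (by omega)) h1.le
        rcases lt_or_eq_of_le hle with h | h
        · exact h
        · exfalso
          have hge : ∀ z, b m < z → f (b m) ≤ f z := by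
            intro z hz
            have hz0 : (0:ℝ) ≤ z := le_trans (hb0 m le_rfl) hz.le
            have := hconv.slope_mono_adjacent (hb0 (m-1) (by omega)) hz0 h1 hz
            rw [h] at this
            simp only [sub_self, zero_div] at this
            rw [le_div_iff₀ (by linarith)] at this
            linarith
          have h0 : f (b m) ≤ 0 := by
            refine ge_of_tendsto hlim ?_
            filter_upwards [Filter.eventually_gt_atTop (b m)] with z hz
            exact hge z hz
          linarith
      have hσneg : σm < 0 := div_neg_of_neg_of_pos (by linarith) hΔ
      set A : ℝ := b m - f (b m) / σm with hA
      have hAgt : b m < A := by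
        have : f (b m) / σm < 0 := div_neg_of_pos_of_neg hfm' hσneg
        rw [hA]; linarith
      set a : ℕ → ℝ := fun k => if k ≤ m then b k else A with ha
      set v : ℕ → ℝ := fun k => if k ≤ m then f (b k) else 0 with hv
      have haval : ∀ k, k ≤ m → a k = b k := fun k hk => if_pos hk
      have havalN : a (m+1) = A := if_neg (by omega)
      have hvval : ∀ k, k ≤ m → v k = f (b k) := fun k hk => if_pos hk
      have hvvalN : v (m+1) = 0 := if_neg (by omega)
      have hlastslope : (v (m+1) - v m) / (a (m+1) - a m) = σm := by
        have hfne : f (b m) ≠ 0 := ne_of_gt hfm'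
        rw [havalN, hvvalN, haval m le_rfl, hvval m le_rfl, hA]
        rw [zero_sub, show b m - f (b m) / σm - b m = -(f (b m) / σm) from by ring,
          neg_div_neg_eq, div_div_eq_mul_div, mul_comm, mul_div_assoc, div_self hfne,
          mul_one]
      obtain ⟨μ, hμnn, hμ⟩ := polya_core (m+1) a v
        (by
          intro k hk
          by_cases hkm : k < m
          · rw [haval k (by omega), haval (k+1) (by omega)]
            exact hbmono k hkm
          · have hkm' : k = m := by omega
            subst hkm'
            rw [haval m le_rfl, havalN]
            exact hAgt)
        hvvalN
        (by
          intro k hk1 hk2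
          by_cases hkm : k + 1 ≤ m
          · rw [hvval k (by omega), hvval (k+1) (by omega), hvval (k-1) (by omega),
              haval k (by omega), haval (k+1) (by omega), haval (k-1) (by omega)]
            exact hslopeb k hk1 hkm
          · have hkm' : k = m := by omega
            subst hkm'
            rw [hlastslope, hvval m le_rfl, hvval (m-1) (by omega),
              haval m le_rfl, haval (m-1) (by omega), ← hσm])
        (by
          intro _
          rw [show m + 1 - 1 = m from rfl, hlastslope]
          exact hσneg.le)
      refine ⟨m+1, a, fun k => if 1 ≤ k ∧ k ≤ m+1 then μ k else 0, ?_, ?_, ?_⟩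
      · intro k
        by_cases h : k ≤ m
        · rw [haval k h]; exact hbnn k
        · rw [show a k = A from if_neg h]
          linarith [hAgt, hb0 m le_rfl]
      · intro k
        by_cases h : 1 ≤ k ∧ k ≤ m+1
        · simp only [if_pos h]; exact hμnn k h.1 h.2
        · simp only [if_neg h]; exact le_rfl
      · intro t ht
        obtain ⟨l, hl, rfl⟩ := hbsurj t ht
        have heq := hμ l (by omega)
        rw [hvval l hl, haval l hl] at heq
        rw [heq]
        refine Finset.sum_congr rfl fun k hk => ?_
        rw [Finset.mem_Ioc] at hk
        simp only [if_pos (show 1 ≤ k ∧ k ≤ m+1 from ⟨hk.1, hk.2⟩)]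

theorem stmt_4 (f : ℝ → ℝ)
    (hpos : ∀ t ∈ Set.Ici (0 : ℝ), 0 ≤ f t)
    (hanti : AntitoneOn f (Set.Ici 0))
    (hconv : ConvexOn ℝ (Set.Ici 0) f)
    (hlim : Tendsto f atTop (nhds 0))
    (g : ℝ → ℝ) (hg : ∀ s : ℝ, g s = f |s|) :
    ∀ (n : ℕ) (s : Fin n → ℝ) (c : Fin n → ℂ),
      0 ≤ ∑ i : Fin n, ∑ j : Fin n,
        c i * (starRingEnd ℂ) (c j) * (g (s i - s j) : ℂ) := by
  intro n s c
  classical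
  set D : Finset ℝ := Finset.image (fun p : Fin n × Fin n => |s p.1 - s p.2|) Finset.univ
    with hDdef
  have hD : ∀ t ∈ D, 0 ≤ t := by
    intro t ht
    rw [hDdef, Finset.mem_image] at ht
    obtain ⟨p, _, rfl⟩ := ht
    exact abs_nonneg _
  obtain ⟨N, aa, μ, haann, hμnn, hrep⟩ := decomp f hpos hanti hconv hlim D hD
  have hmem : ∀ i j : Fin n, |s i - s j| ∈ D := fun i j =>
    Finset.mem_image.2 ⟨(i, j), Finset.mem_univ _, rfl⟩
  have hgr : ∀ i j : Fin n, ((g (s i - s j) : ℝ) : ℂ)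
      = ∑ k ∈ Finset.Ioc 0 N, (μ k : ℂ) * ((max 0 (aa k - |s i - s j|) : ℝ) : ℂ) := by
    intro i j
    rw [hg, hrep _ (hmem i j)]
    push_cast
    rfl
  have key : (∑ i : Fin n, ∑ j : Fin n, c i * (starRingEnd ℂ) (c j) * ((g (s i - s j) : ℝ) : ℂ))
      = ∑ k ∈ Finset.Ioc 0 N, (μ k : ℂ) *
          ∑ i : Fin n, ∑ j : Fin n,
            c i * (starRingEnd ℂ) (c j) * ((max 0 (aa k - |s i - s j|) : ℝ) : ℂ) := by
    simp only [hgr, Finset.mul_sum]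
    rw [Finset.sum_congr rfl (fun i (_ : i ∈ Finset.univ) => Finset.sum_comm), Finset.sum_comm]
    refine Finset.sum_congr rfl fun k _ => Finset.sum_congr rfl fun i _ =>
      Finset.sum_congr rfl fun j _ => by ring
  rw [key]
  refine Finset.sum_nonneg fun k _ => mul_nonneg ?_ (tent_psd n s c (aa k) (haann k))
  rw [Complex.zero_le_real]
  exact hμnn k
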